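/- Let V_1 and V_2 be disjoint finite nonempty sets of positive integers with min V_1 < min V_2, let T_1 be an unordered increasing tree with label set V_1 and T_2 an unordered increasing tree with label set V_2, and let T_2 • T_1 be the grafting of T_2 on T_1. Then wt(T_2 • T_1) = wt(T_1) · wt(T_2) · k_{min V_1} · (K_{V_2} − |V_2| + 1), where K_{V_2} = Σ_{u ∈ V_2} k_u, as an identity in ℚ[(k_v)]. -/

import Mathlib

open scoped Classical

/-- The root label of a tree with label set `V`, namely `min V` (junk value `0` if `V = ∅`). -/
def rootOf (V : Finset ℕ) : ℕ := V.min.untopD 0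

/-- An unordered increasing tree with label set `V`, encoded by a (total) parent function
`f : ℕ → ℕ`: every non-root vertex `v ∈ V` has a father `f v ∈ V` with `f v < v`;
as a normalization, `f` is the identity on the root and outside `V`. -/
def IsIncTree (V : Finset ℕ) (f : ℕ → ℕ) : Prop :=
  (∀ v ∈ V, if v = rootOf V then f v = v else f v ∈ V ∧ f v < v) ∧ ∀ v, v ∉ V → f v = v

/-- The hook of a vertex `v` in the tree with label set `V` and parent function `f`:
the set of `u ∈ V` consisting of `v` and its descendants (`u` is a descendant of `v` if
iterating `f` starting from `u` reaches `v`). -/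
noncomputable def hookN (V : Finset ℕ) (f : ℕ → ℕ) (v : ℕ) : Finset ℕ :=
  V.filter fun u => ∃ n, f^[n] u = v

/-- The weight of an unordered increasing tree with label set `V` and parent function `f`:
`wt(T) = ∏_{v ∈ V, v ≠ min V} k_{f(v)} · ((Σ_{u ∈ 𝔥_T(v)} k_u) − h_T(v) + 1)`,
in the polynomial ring `ℚ[(k_v)]` (the variable `v : ℕ` is `k_v`). -/
noncomputable def wtN (V : Finset ℕ) (f : ℕ → ℕ) : MvPolynomial ℕ ℚ :=
  ∏ v ∈ V.erase (rootOf V),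
    MvPolynomial.X (f v) *
      ((∑ u ∈ hookN V f v, MvPolynomial.X u) - ((hookN V f v).card : MvPolynomial ℕ ℚ) + 1)

lemma rootOf_eq_min' {V : Finset ℕ} (h : V.Nonempty) : rootOf V = V.min' h := by
  rw [rootOf, ← Finset.coe_min' h, WithTop.untopD_coe]

lemma rootOf_mem {V : Finset ℕ} (h : V.Nonempty) : rootOf V ∈ V := by
  rw [rootOf_eq_min' h]; exact V.min'_mem h

lemma rootOf_le {V : Finset ℕ} {v : ℕ} (hv : v ∈ V) : rootOf V ≤ v := by
  rw [rootOf_eq_min' ⟨v, hv⟩]; exact Finset.min'_le V v hv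

lemma incTree_maps {V : Finset ℕ} {f : ℕ → ℕ} (hf : IsIncTree V f) {u : ℕ} (hu : u ∈ V) :
    f u ∈ V := by
  have h := hf.1 u hu
  by_cases hr : u = rootOf V
  · rw [if_pos hr] at h; rw [h]; exact hu
  · rw [if_neg hr] at h; exact h.1

lemma incTree_fix_root {V : Finset ℕ} {f : ℕ → ℕ} (hf : IsIncTree V f) (h : V.Nonempty) :
    f (rootOf V) = rootOf V := by
  have := hf.1 _ (rootOf_mem h)
  simpa using this

lemma incTree_reach_root {V : Finset ℕ} {f : ℕ → ℕ} (hf : IsIncTree V f) :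
    ∀ u ∈ V, ∃ n, f^[n] u = rootOf V := by
  intro u
  induction u using Nat.strong_induction_on with
  | _ u ih =>
    intro hu
    by_cases hr : u = rootOf V
    · exact ⟨0, hr⟩
    · have h := hf.1 u hu
      rw [if_neg hr] at h
      obtain ⟨n, hn⟩ := ih (f u) h.2 h.1
      exact ⟨n + 1, by rw [Function.iterate_succ_apply, hn]⟩

lemma hookN_root {V : Finset ℕ} {f : ℕ → ℕ} (hf : IsIncTree V f) :
    hookN V f (rootOf V) = V := by
  ext u
  simp only [hookN, Finset.mem_filter, and_iff_left_iff_imp]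
  exact incTree_reach_root hf u

/-- The grafting formula. -/
theorem stmt10 (V₁ V₂ : Finset ℕ) (h₁ : V₁.Nonempty) (h₂ : V₂.Nonempty)
    (hdisj : Disjoint V₁ V₂) (hpos : ∀ v ∈ V₁ ∪ V₂, 0 < v)
    (hmin : rootOf V₁ < rootOf V₂)
    (f₁ f₂ : ℕ → ℕ) (hf₁ : IsIncTree V₁ f₁) (hf₂ : IsIncTree V₂ f₂) :
    wtN (V₁ ∪ V₂)
        (fun v => if v ∈ V₂ then (if v = rootOf V₂ then rootOf V₁ else f₂ v) else f₁ v)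
      = wtN V₁ f₁ * wtN V₂ f₂ * MvPolynomial.X (rootOf V₁) *
          ((∑ u ∈ V₂, MvPolynomial.X u) - (V₂.card : MvPolynomial ℕ ℚ) + 1) := by
  set g : ℕ → ℕ :=
    fun v => if v ∈ V₂ then (if v = rootOf V₂ then rootOf V₁ else f₂ v) else f₁ v with hg
  have hr₁V : rootOf V₁ ∈ V₁ := rootOf_mem h₁
  have hr₂V : rootOf V₂ ∈ V₂ := rootOf_mem h₂
  have hr₁n2 : rootOf V₁ ∉ V₂ := Finset.disjoint_left.mp hdisj hr₁V
  have hnot2 : ∀ v ∈ V₁, v ∉ V₂ := fun v hv => Finset.disjoint_left.mp hdisj hv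
  have hnot1 : ∀ v ∈ V₂, v ∉ V₁ := fun v hv => Finset.disjoint_right.mp hdisj hv
  have hg1 : ∀ v ∈ V₁, g v = f₁ v := by
    intro v hv; rw [hg]; simp only [if_neg (hnot2 v hv)]
  have hgr₂ : g (rootOf V₂) = rootOf V₁ := by
    rw [hg]; simp [hr₂V]
  have hg2 : ∀ v ∈ V₂, v ≠ rootOf V₂ → g v = f₂ v := by
    intro v hv hne; rw [hg]; simp only [if_pos hv, if_neg hne]
  -- chains starting in V₁ agree with f₁ and stay in V₁
  have hchain₁ : ∀ u ∈ V₁, ∀ n, g^[n] u = f₁^[n] u ∧ g^[n] u ∈ V₁ := by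
    intro u hu n
    induction n with
    | zero => exact ⟨rfl, hu⟩
    | succ n ih =>
      rw [Function.iterate_succ_apply', Function.iterate_succ_apply', ih.1]
      have hm : f₁^[n] u ∈ V₁ := ih.1 ▸ ih.2
      exact ⟨hg1 _ hm, hg1 _ hm ▸ (hg1 _ hm).symm ▸ incTree_maps hf₁ hm⟩
  -- chains starting in V₂: either agree with f₂ inside V₂, or have been absorbed at the roots
  have hchain₂ : ∀ u ∈ V₂, ∀ n,
      (g^[n] u = f₂^[n] u ∧ g^[n] u ∈ V₂) ∨ (g^[n] u = rootOf V₁ ∧ f₂^[n] u = rootOf V₂) := by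
    intro u hu n
    induction n with
    | zero => exact Or.inl ⟨rfl, hu⟩
    | succ n ih =>
      rw [Function.iterate_succ_apply', Function.iterate_succ_apply']
      rcases ih with ⟨heq, hmem⟩ | ⟨hh1, hh2⟩
      · rw [heq] at hmem ⊢
        by_cases hr : f₂^[n] u = rootOf V₂
        · right
          rw [hr]
          exact ⟨hgr₂, incTree_fix_root hf₂ h₂⟩
        · left
          have h := hf₂.1 _ hmem
          rw [if_neg hr] at h
          exact ⟨hg2 _ hmem hr, (hg2 _ hmem hr).symm ▸ h.1⟩
      · right
        rw [hh1, hh2]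
        refine ⟨?_, incTree_fix_root hf₂ h₂⟩
        have : g (rootOf V₁) = f₁ (rootOf V₁) := hg1 _ hr₁V
        rw [this, incTree_fix_root hf₁ h₁]
  -- every vertex of V₂ reaches rootOf V₂ under g
  have hreach : ∀ u ∈ V₂, ∃ n, g^[n] u = rootOf V₂ := by
    intro u
    induction u using Nat.strong_induction_on with
    | _ u ih =>
      intro hu
      by_cases hr : u = rootOf V₂
      · exact ⟨0, hr⟩
      · have h := hf₂.1 u hu
        rw [if_neg hr] at h
        obtain ⟨n, hn⟩ := ih (f₂ u) h.2 h.1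
        exact ⟨n + 1, by rw [Function.iterate_succ_apply, hg2 u hu hr, hn]⟩
  -- root of the union
  have hroot : rootOf (V₁ ∪ V₂) = rootOf V₁ := by
    have hun : (V₁ ∪ V₂).Nonempty := h₁.mono Finset.subset_union_left
    apply le_antisymm
    · exact rootOf_le (Finset.mem_union_left _ hr₁V)
    · have hm := rootOf_mem hun
      rcases Finset.mem_union.mp hm with h | h
      · exact rootOf_le h
      · exact le_of_lt (lt_of_lt_of_le hmin (rootOf_le h))
  -- hooks inside V₁
  have hook₁ : ∀ v ∈ V₁.erase (rootOf V₁),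
      hookN (V₁ ∪ V₂) g v = hookN V₁ f₁ v := by
    intro v hv
    obtain ⟨hvne, hvV⟩ := Finset.mem_erase.mp hv
    ext u
    simp only [hookN, Finset.mem_filter, Finset.mem_union]
    constructor
    · rintro ⟨hu12, n, hn⟩
      rcases hu12 with hu1 | hu2
      · exact ⟨hu1, n, (hchain₁ u hu1 n).1 ▸ hn⟩
      · rcases hchain₂ u hu2 n with ⟨_, hmem⟩ | ⟨hh1, _⟩
        · exact absurd (hn ▸ hmem) (hnot2 v hvV)
        · exact absurd (hn ▸ hh1 : v = rootOf V₁) hvne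
    · rintro ⟨hu1, n, hn⟩
      exact ⟨Or.inl hu1, n, (hchain₁ u hu1 n).1.trans hn⟩
  -- hooks inside V₂
  have hook₂ : ∀ v ∈ V₂, hookN (V₁ ∪ V₂) g v = hookN V₂ f₂ v := by
    intro v hv
    ext u
    simp only [hookN, Finset.mem_filter, Finset.mem_union]
    constructor
    · rintro ⟨hu12, n, hn⟩
      rcases hu12 with hu1 | hu2
      · exact absurd (hn ▸ (hchain₁ u hu1 n).2) (hnot1 v hv)
      · refine ⟨hu2, ?_⟩
        rcases hchain₂ u hu2 n with ⟨heq, _⟩ | ⟨hh1, _⟩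
        · exact ⟨n, heq ▸ hn⟩
        · exact absurd ((hn ▸ hh1 : v = rootOf V₁) ▸ hv) hr₁n2
    · rintro ⟨hu2, n, hn⟩
      refine ⟨Or.inr hu2, ?_⟩
      by_cases hvr : v = rootOf V₂
      · exact hvr ▸ hreach u hu2
      · rcases hchain₂ u hu2 n with ⟨heq, _⟩ | ⟨_, hh2⟩
        · exact ⟨n, heq.trans hn⟩
        · exact absurd (hn.symm.trans hh2) hvr
  have hd : Disjoint (V₁.erase (rootOf V₁)) V₂ := hdisj.mono_left (Finset.erase_subset _ _)
  have herase : (V₁ ∪ V₂).erase (rootOf V₁) = V₁.erase (rootOf V₁) ∪ V₂ := by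
    ext v
    simp only [Finset.mem_erase, Finset.mem_union]
    constructor
    · rintro ⟨hne, h1 | h2⟩
      exacts [Or.inl ⟨hne, h1⟩, Or.inr h2]
    · rintro (⟨hne, h1⟩ | h2)
      · exact ⟨hne, Or.inl h1⟩
      · exact ⟨fun h => hr₁n2 (h ▸ h2), Or.inr h2⟩
  have hV₂hook : hookN V₂ f₂ (rootOf V₂) = V₂ := hookN_root hf₂
  -- now compute
  rw [wtN, hroot, herase, Finset.prod_union hd]
  have e₁ : (∏ v ∈ V₁.erase (rootOf V₁),
      MvPolynomial.X (g v) *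
        ((∑ u ∈ hookN (V₁ ∪ V₂) g v, MvPolynomial.X u)
          - ((hookN (V₁ ∪ V₂) g v).card : MvPolynomial ℕ ℚ) + 1)) = wtN V₁ f₁ := by
    rw [wtN]
    refine Finset.prod_congr rfl fun v hv => ?_
    rw [hook₁ v hv, hg1 v (Finset.mem_of_mem_erase hv)]
  have e₂ : (∏ v ∈ V₂,
      MvPolynomial.X (g v) *
        ((∑ u ∈ hookN (V₁ ∪ V₂) g v, MvPolynomial.X u)
          - ((hookN (V₁ ∪ V₂) g v).card : MvPolynomial ℕ ℚ) + 1))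
      = (MvPolynomial.X (rootOf V₁) *
          ((∑ u ∈ V₂, MvPolynomial.X u) - (V₂.card : MvPolynomial ℕ ℚ) + 1)) * wtN V₂ f₂ := by
    rw [← Finset.mul_prod_erase V₂ _ hr₂V]
    congr 1
    · rw [hook₂ _ hr₂V, hV₂hook, hgr₂]
    · rw [wtN]
      refine Finset.prod_congr rfl fun v hv => ?_
      obtain ⟨hvne, hvV⟩ := Finset.mem_erase.mp hv
      rw [hook₂ v hvV, hg2 v hvV hvne]
  rw [e₁, e₂]
  ring
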